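/- arXiv:2406.10465 — 3 statements merged into one kernel-verified Lean document; each statement's English description precedes it below -/
import Mathlib

section
/- Let P₂ ∈ ℝ and Γ₂ : [0,∞) → ℝ be measurable with ∫|Γ₂(y)|(1+y²)dν(y) < ∞, and assume A := ∫(P₂+Γ₂(y))y² λ dν(y) > 0. Then inf_{u≥0} G₂(u,P₂,Γ₂) = − [ (P₂b − ∫Γ₂(y)y λ dν(y))⁺ ]² / A, and this infimum is attained at û₂ := (P₂b − ∫Γ₂(y)y λ dν(y))⁺ / A. -/
open MeasureTheory Real Set

/-- `G₂(u,P₂,Γ₂) := ∫ (P₂+Γ₂(y))·(((1+uy)⁺)² − 1) λ dν(y) − 2uP₂(b+λb_Y)`. -/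
noncomputable def G2 (ν : Measure ℝ) (lam b P₂ : ℝ) (Γ₂ : ℝ → ℝ) (u : ℝ) : ℝ :=
  lam * ∫ y, (P₂ + Γ₂ y) * ((max (1 + u * y) 0) ^ 2 - 1) ∂ν
    - 2 * u * P₂ * (b + lam * ∫ y, y ∂ν)

/-- if `A := ∫(P₂+Γ₂(y))y² λ dν(y) > 0` then
`inf_{u≥0} G₂(u,P₂,Γ₂) = −[(P₂b − ∫Γ₂(y)y λ dν(y))⁺]²/A`, attained at
`û₂ = (P₂b − ∫Γ₂(y)y λ dν(y))⁺/A`. -/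
theorem stmt1 (ν : Measure ℝ) [IsProbabilityMeasure ν]
    (hν0 : ∀ᵐ y ∂ν, 0 ≤ y)
    (lam b : ℝ) (hlam : 0 < lam) (hb : 0 < b)
    (hy : Integrable (fun y => y) ν)
    (hy2 : Integrable (fun y => y ^ 2) ν)
    (hbY : 0 < ∫ y, y ∂ν)
    (P₂ : ℝ) (Γ₂ : ℝ → ℝ) (hΓm : Measurable Γ₂)
    (hΓ : Integrable (fun y => |Γ₂ y| * (1 + y ^ 2)) ν)
    (A : ℝ) (hA : A = lam * ∫ y, (P₂ + Γ₂ y) * y ^ 2 ∂ν) (hApos : 0 < A) :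
    IsLeast ((fun u => G2 ν lam b P₂ Γ₂ u) '' Set.Ici 0)
      (-(max (P₂ * b - lam * ∫ y, Γ₂ y * y ∂ν) 0) ^ 2 / A)
    ∧ G2 ν lam b P₂ Γ₂ ((max (P₂ * b - lam * ∫ y, Γ₂ y * y ∂ν) 0) / A)
      = -(max (P₂ * b - lam * ∫ y, Γ₂ y * y ∂ν) 0) ^ 2 / A := by
  have hAne : A ≠ 0 := ne_of_gt hApos
  set B : ℝ := P₂ * b - lam * ∫ y, Γ₂ y * y ∂ν with hB
  set M : ℝ := max B 0 with hM
  -- integrability facts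
  have hΓy : Integrable (fun y => Γ₂ y * y) ν := by
    refine hΓ.mono' ((hΓm.mul measurable_id).aestronglyMeasurable) ?_
    filter_upwards [hν0] with y hy0
    rw [norm_eq_abs, abs_mul, abs_of_nonneg hy0]
    nlinarith [abs_nonneg (Γ₂ y), mul_nonneg (abs_nonneg (Γ₂ y)) (sq_nonneg (y-1)), mul_nonneg (abs_nonneg (Γ₂ y)) hy0]
  have hΓy2 : Integrable (fun y => Γ₂ y * y ^ 2) ν := by
    refine hΓ.mono' ((hΓm.mul (measurable_id.pow_const 2)).aestronglyMeasurable) ?_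
    filter_upwards [hν0] with y hy0
    rw [norm_eq_abs, abs_mul, abs_of_nonneg (by positivity : (0:ℝ) ≤ y ^ 2)]
    nlinarith [abs_nonneg (Γ₂ y)]
  have hi1 : Integrable (fun y => P₂ * y + Γ₂ y * y) ν := (hy.const_mul P₂).add hΓy
  have hi2 : Integrable (fun y => P₂ * y ^ 2 + Γ₂ y * y ^ 2) ν := (hy2.const_mul P₂).add hΓy2
  -- A in split form
  have hA' : A = lam * (P₂ * (∫ y, y ^ 2 ∂ν) + ∫ y, Γ₂ y * y ^ 2 ∂ν) := by
    rw [hA]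
    congr 1
    rw [← integral_const_mul P₂, ← integral_add (hy2.const_mul P₂) hΓy2]
    apply integral_congr_ae
    filter_upwards with y
    ring
  -- quadratic form of G2 on u ≥ 0
  have hG : ∀ u : ℝ, 0 ≤ u → G2 ν lam b P₂ Γ₂ u = A * u ^ 2 - 2 * B * u := by
    intro u hu
    have hcongr : (∫ y, (P₂ + Γ₂ y) * ((max (1 + u * y) 0) ^ 2 - 1) ∂ν)
        = ∫ y, (2 * u) * (P₂ * y + Γ₂ y * y) + u ^ 2 * (P₂ * y ^ 2 + Γ₂ y * y ^ 2) ∂ν := by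
      apply integral_congr_ae
      filter_upwards [hν0] with y hy0
      have h1 : 0 ≤ 1 + u * y := by nlinarith
      rw [max_eq_left h1]
      ring
    simp only [G2]
    rw [hcongr, integral_add (hi1.const_mul _) (hi2.const_mul _), integral_const_mul,
      integral_const_mul, integral_add (hy.const_mul P₂) hΓy,
      integral_add (hy2.const_mul P₂) hΓy2, integral_const_mul, integral_const_mul,
      hA', hB]
    ring
  have hu₀ : (0:ℝ) ≤ M / A := div_nonneg (le_max_right _ _) hApos.le
  have hBM : B * M = M ^ 2 := by
    rcases le_total B 0 with h | h
    · rw [hM, max_eq_right h]; ring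
    · rw [hM, max_eq_left h]; ring
  have hval : G2 ν lam b P₂ Γ₂ (M / A) = -M ^ 2 / A := by
    rw [hG _ hu₀]
    field_simp
    linear_combination (-2) * hBM
  refine ⟨⟨⟨M / A, hu₀, hval.trans (by rw [neg_div])⟩, ?_⟩, hval.trans (by rw [neg_div])⟩
  rintro x ⟨u, hu, rfl⟩
  show -M ^ 2 / A ≤ G2 ν lam b P₂ Γ₂ u
  rw [hG u hu, div_le_iff₀ hApos]
  have hBle : B * u ≤ M * u := mul_le_mul_of_nonneg_right (le_max_left _ _) hu
  nlinarith [sq_nonneg (A * u - M)]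
end

section
/- Fix k > 0, P₂ ∈ ℝ and measurable Γ₂, Γ̃₂ : [0,∞) → ℝ, each with ∫|·(y)|(1+y²)dν(y) < ∞. Define ρ′(y) := (k²y² + 2ky)·𝟙_{Γ₂(y) < Γ̃₂(y)}. Then 0 ≤ ρ′(y) ≤ k²y² + 2ky for every y ≥ 0, and (inf_{0≤u≤k} G₂(u,P₂,Γ₂)) − (inf_{0≤u≤k} G₂(u,P₂,Γ̃₂)) ≥ ∫ ρ′(y)·(Γ₂(y) − Γ̃₂(y)) λ dν(y). -/
open MeasureTheory Real Set

lemma factor_bounds {u k y : ℝ} (hu0 : 0 ≤ u) (huk : u ≤ k) (hy : 0 ≤ y) :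
    0 ≤ (max (1 + u * y) 0) ^ 2 - 1 ∧
      (max (1 + u * y) 0) ^ 2 - 1 ≤ (k ^ 2 + 2 * k) * (1 + y ^ 2) := by
  have h1 : (0:ℝ) ≤ 1 + u * y := by positivity
  rw [max_eq_left h1]
  have hk0 : 0 ≤ k := hu0.trans huk
  constructor <;> nlinarith [sq_nonneg y, sq_nonneg (y - 1), mul_nonneg hu0 hy,
    mul_nonneg hk0 hy, mul_le_mul_of_nonneg_right huk hy, sq_nonneg (u*y), sq_nonneg (k*y)]

lemma intB (ν : Measure ℝ) [IsProbabilityMeasure ν]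
    (hy2 : Integrable (fun y => y ^ 2) ν) (k P₂ : ℝ) (Γ : ℝ → ℝ)
    (hΓ : Integrable (fun y => |Γ y| * (1 + y ^ 2)) ν) :
    Integrable (fun y => (k ^ 2 + 2 * k) * ((|P₂| + |Γ y|) * (1 + y ^ 2))) ν := by
  apply Integrable.const_mul
  have h1 : Integrable (fun y : ℝ => |P₂| * (1 + y ^ 2)) ν :=
    (((integrable_const (1:ℝ)).add hy2).const_mul _)
  have h2 := h1.add hΓ
  refine h2.congr (Filter.Eventually.of_forall fun y => ?_)
  simp only [Pi.add_apply]; ring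

lemma intg (ν : Measure ℝ) [IsProbabilityMeasure ν] (hν0 : ∀ᵐ y ∂ν, 0 ≤ y)
    (hy2 : Integrable (fun y => y ^ 2) ν) {k : ℝ} (P₂ : ℝ) (Γ : ℝ → ℝ)
    (hΓm : Measurable Γ) (hΓ : Integrable (fun y => |Γ y| * (1 + y ^ 2)) ν)
    {u : ℝ} (hu0 : 0 ≤ u) (huk : u ≤ k) :
    Integrable (fun y => (P₂ + Γ y) * ((max (1 + u * y) 0) ^ 2 - 1)) ν := by
  apply (intB ν hy2 k P₂ Γ hΓ).mono'
  · apply Measurable.aestronglyMeasurable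
    fun_prop
  · filter_upwards [hν0] with y hy
    obtain ⟨hf0, hfk⟩ := factor_bounds hu0 huk hy
    rw [Real.norm_eq_abs, abs_mul, abs_of_nonneg hf0]
    calc |P₂ + Γ y| * ((max (1 + u * y) 0) ^ 2 - 1)
        ≤ (|P₂| + |Γ y|) * ((k ^ 2 + 2 * k) * (1 + y ^ 2)) := by
          apply mul_le_mul (abs_add_le _ _) hfk hf0 (by positivity)
      _ = (k ^ 2 + 2 * k) * ((|P₂| + |Γ y|) * (1 + y ^ 2)) := by ring


/-- with `ρ′(y) = (k²y² + 2ky)·𝟙_{Γ₂(y) < Γ̃₂(y)}` one has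
`0 ≤ ρ′(y) ≤ k²y² + 2ky` on `[0,∞)` and
`inf_{0≤u≤k} G₂(·,Γ₂) − inf_{0≤u≤k} G₂(·,Γ̃₂) ≥ ∫ ρ′(y)(Γ₂(y)−Γ̃₂(y)) λ dν(y)`. -/
theorem stmt3 (ν : Measure ℝ) [IsProbabilityMeasure ν]
    (hν0 : ∀ᵐ y ∂ν, 0 ≤ y)
    (lam b : ℝ) (hlam : 0 < lam) (hb : 0 < b)
    (hy : Integrable (fun y => y) ν)
    (hy2 : Integrable (fun y => y ^ 2) ν)
    (hbY : 0 < ∫ y, y ∂ν)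
    (k : ℝ) (hk : 0 < k)
    (P₂ : ℝ) (Γ₂ Γ₂' : ℝ → ℝ)
    (hΓ₂m : Measurable Γ₂) (hΓ₂'m : Measurable Γ₂')
    (hΓ₂ : Integrable (fun y => |Γ₂ y| * (1 + y ^ 2)) ν)
    (hΓ₂' : Integrable (fun y => |Γ₂' y| * (1 + y ^ 2)) ν)
    (ρ' : ℝ → ℝ)
    (hρ' : ∀ y, ρ' y = if Γ₂ y < Γ₂' y then k ^ 2 * y ^ 2 + 2 * k * y else 0) :
    (∀ y : ℝ, 0 ≤ y → 0 ≤ ρ' y ∧ ρ' y ≤ k ^ 2 * y ^ 2 + 2 * k * y) ∧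
    sInf ((fun u => G2 ν lam b P₂ Γ₂ u) '' Set.Icc 0 k)
        - sInf ((fun u => G2 ν lam b P₂ Γ₂' u) '' Set.Icc 0 k)
      ≥ lam * ∫ y, ρ' y * (Γ₂ y - Γ₂' y) ∂ν := by
  have hρfun : ρ' = fun y => if Γ₂ y < Γ₂' y then k ^ 2 * y ^ 2 + 2 * k * y else 0 :=
    funext hρ'
  have hρbd : ∀ y : ℝ, 0 ≤ y → 0 ≤ ρ' y ∧ ρ' y ≤ k ^ 2 * y ^ 2 + 2 * k * y := by
    intro y hy0
    rw [hρ']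
    split
    · exact ⟨by positivity, le_refl _⟩
    · exact ⟨le_refl _, by positivity⟩
  refine ⟨hρbd, ?_⟩
  -- integrability of ρ' * (Γ₂ - Γ₂')
  have hρm : Measurable ρ' := by
    rw [hρfun]
    exact Measurable.ite (measurableSet_lt hΓ₂m hΓ₂'m) (by fun_prop) measurable_const
  have hρint : Integrable (fun y => ρ' y * (Γ₂ y - Γ₂' y)) ν := by
    apply Integrable.mono' ((intB ν hy2 k 0 (fun y => |Γ₂ y| + |Γ₂' y|)
      (by refine (hΓ₂.add hΓ₂').congr (Filter.Eventually.of_forall fun y => ?_)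
          simp [abs_of_nonneg (by positivity : (0:ℝ) ≤ |Γ₂ y| + |Γ₂' y|), add_mul])))
    · exact (hρm.mul (hΓ₂m.sub hΓ₂'m)).aestronglyMeasurable
    · filter_upwards [hν0] with y hy0
      have h1 := hρbd y hy0
      have h2 : ρ' y ≤ (k ^ 2 + 2 * k) * (1 + y ^ 2) := by
        nlinarith [h1.2, sq_nonneg (y - 1), sq_nonneg y]
      rw [Real.norm_eq_abs, abs_mul, abs_zero,
        abs_of_nonneg (show (0:ℝ) ≤ |Γ₂ y| + |Γ₂' y| by positivity),
        abs_of_nonneg h1.1]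
      calc ρ' y * |Γ₂ y - Γ₂' y|
          ≤ ((k ^ 2 + 2 * k) * (1 + y ^ 2)) * (|Γ₂ y| + |Γ₂' y|) :=
            mul_le_mul h2 (abs_sub _ _) (abs_nonneg _) (by positivity)
        _ = (k ^ 2 + 2 * k) * ((0 + (|Γ₂ y| + |Γ₂' y|)) * (1 + y ^ 2)) := by ring
  -- key pointwise-in-u inequality
  have key : ∀ u ∈ Set.Icc (0:ℝ) k,
      G2 ν lam b P₂ Γ₂' u + lam * ∫ y, ρ' y * (Γ₂ y - Γ₂' y) ∂ν
        ≤ G2 ν lam b P₂ Γ₂ u := by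
    intro u hu
    obtain ⟨hu0, huk⟩ := hu
    have hI₂ := intg ν hν0 hy2 P₂ Γ₂ hΓ₂m hΓ₂ hu0 huk
    have hI₂' := intg ν hν0 hy2 P₂ Γ₂' hΓ₂'m hΓ₂' hu0 huk
    have hmono : ∫ y, ρ' y * (Γ₂ y - Γ₂' y) ∂ν
        ≤ ∫ y, ((P₂ + Γ₂ y) * ((max (1 + u * y) 0) ^ 2 - 1)
              - (P₂ + Γ₂' y) * ((max (1 + u * y) 0) ^ 2 - 1)) ∂ν := by
      apply integral_mono_ae hρint (hI₂.sub hI₂')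
      filter_upwards [hν0] with y hy0
      obtain ⟨hf0, hfk⟩ := factor_bounds hu0 huk hy0
      have heq : (P₂ + Γ₂ y) * ((max (1 + u * y) 0) ^ 2 - 1)
            - (P₂ + Γ₂' y) * ((max (1 + u * y) 0) ^ 2 - 1)
          = (Γ₂ y - Γ₂' y) * ((max (1 + u * y) 0) ^ 2 - 1) := by ring
      simp only [Pi.sub_apply]
      rw [heq, hρ']
      have hfle : (max (1 + u * y) 0) ^ 2 - 1 ≤ k ^ 2 * y ^ 2 + 2 * k * y := by
        have h1 : (0:ℝ) ≤ 1 + u * y := by positivity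
        rw [max_eq_left h1]
        nlinarith [mul_le_mul_of_nonneg_right huk hy0, mul_nonneg hu0 hy0,
          mul_nonneg (hu0.trans huk) hy0]
      split
      · rename_i hlt
        have : Γ₂ y - Γ₂' y ≤ 0 := by linarith
        nlinarith
      · rename_i hge
        have : 0 ≤ Γ₂ y - Γ₂' y := by push_neg at hge; linarith
        simp only [zero_mul]
        exact mul_nonneg this hf0
    have h4 := mul_le_mul_of_nonneg_left
      (le_trans hmono (le_of_eq (integral_sub hI₂ hI₂'))) hlam.le
    rw [mul_sub] at h4
    simp only [G2]
    linarith
  -- lower bound for G2 with Γ₂'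
  set C := lam * ∫ y, (k ^ 2 + 2 * k) * ((|P₂| + |Γ₂' y|) * (1 + y ^ 2)) ∂ν
      + 2 * k * |P₂| * |b + lam * ∫ y, y ∂ν| with hC
  have hlow : ∀ u ∈ Set.Icc (0:ℝ) k, -C ≤ G2 ν lam b P₂ Γ₂' u := by
    intro u hu
    obtain ⟨hu0, huk⟩ := hu
    have hI₂' := intg ν hν0 hy2 P₂ Γ₂' hΓ₂'m hΓ₂' hu0 huk
    have hbd : |∫ y, (P₂ + Γ₂' y) * ((max (1 + u * y) 0) ^ 2 - 1) ∂ν|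
        ≤ ∫ y, (k ^ 2 + 2 * k) * ((|P₂| + |Γ₂' y|) * (1 + y ^ 2)) ∂ν := by
      rw [← Real.norm_eq_abs]
      apply norm_integral_le_of_norm_le (intB ν hy2 k P₂ Γ₂' hΓ₂')
      filter_upwards [hν0] with y hy0
      obtain ⟨hf0, hfk⟩ := factor_bounds hu0 huk hy0
      rw [Real.norm_eq_abs, abs_mul, abs_of_nonneg hf0]
      calc |P₂ + Γ₂' y| * ((max (1 + u * y) 0) ^ 2 - 1)
          ≤ (|P₂| + |Γ₂' y|) * ((k ^ 2 + 2 * k) * (1 + y ^ 2)) :=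
            mul_le_mul (abs_add_le _ _) hfk hf0 (by positivity)
        _ = (k ^ 2 + 2 * k) * ((|P₂| + |Γ₂' y|) * (1 + y ^ 2)) := by ring
    have hterm : |2 * u * P₂ * (b + lam * ∫ y, y ∂ν)|
        ≤ 2 * k * |P₂| * |b + lam * ∫ y, y ∂ν| := by
      rw [abs_mul, abs_mul, abs_mul]
      have : |(2:ℝ)| * |u| = 2 * u := by
        rw [abs_of_nonneg hu0]; norm_num
      rw [this]
      apply mul_le_mul_of_nonneg_right _ (abs_nonneg _)
      apply mul_le_mul_of_nonneg_right _ (abs_nonneg _)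
      linarith
    simp only [G2, hC]
    have h1 : lam * ∫ y, (P₂ + Γ₂' y) * ((max (1 + u * y) 0) ^ 2 - 1) ∂ν
        ≥ -(lam * ∫ y, (k ^ 2 + 2 * k) * ((|P₂| + |Γ₂' y|) * (1 + y ^ 2)) ∂ν) := by
      have := neg_abs_le (∫ y, (P₂ + Γ₂' y) * ((max (1 + u * y) 0) ^ 2 - 1) ∂ν)
      nlinarith [abs_nonneg (∫ y, (P₂ + Γ₂' y) * ((max (1 + u * y) 0) ^ 2 - 1) ∂ν)]
    have h2 := neg_abs_le (2 * u * P₂ * (b + lam * ∫ y, y ∂ν))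
    have h3 := le_abs_self (2 * u * P₂ * (b + lam * ∫ y, y ∂ν))
    linarith [hterm]
  have hne : ((fun u => G2 ν lam b P₂ Γ₂' u) '' Set.Icc 0 k).Nonempty :=
    (Set.nonempty_Icc.mpr hk.le).image _
  have hbdd : BddBelow ((fun u => G2 ν lam b P₂ Γ₂' u) '' Set.Icc 0 k) := by
    refine ⟨-C, ?_⟩
    rintro x ⟨u, hu, rfl⟩
    exact hlow u hu
  rw [ge_iff_le, le_sub_iff_add_le]
  apply le_csInf ((Set.nonempty_Icc.mpr hk.le).image _)
  rintro x ⟨u, hu, rfl⟩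
  have h1 : sInf ((fun u => G2 ν lam b P₂ Γ₂' u) '' Set.Icc 0 k)
      ≤ G2 ν lam b P₂ Γ₂' u := csInf_le hbdd ⟨u, hu, rfl⟩
  linarith [key u hu]
end

section
/- Let β > 0, m, z ∈ ℝ, and A₁, A₂ > 0 satisfy A₁β² ≤ 1, A₂β² < 1, and z ≥ m/β. Define J(ζ) := A₁·((m − βζ)⁺)² + A₂·((m − βζ)⁻)² − (ζ − z)² for ζ ∈ ℝ, and set ζ̂ := (A₂βm − z)/(A₂β² − 1). Then ζ̂ ≥ m/β (equivalently m − βζ̂ ≤ 0), and J(ζ̂) = sup_{ζ∈ℝ} J(ζ) = (A₂β²/(1 − A₂β²))·(z − m/β)². -/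
open Set

/-- for `β > 0`, `A₁β² ≤ 1`, `A₂β² < 1`, `z ≥ m/β`, with
`J(ζ) = A₁((m−βζ)⁺)² + A₂((m−βζ)⁻)² − (ζ−z)²` and `ζ̂ = (A₂βm − z)/(A₂β² − 1)`:
`ζ̂ ≥ m/β` (equivalently `m − βζ̂ ≤ 0`) and
`J(ζ̂) = sup_ζ J(ζ) = (A₂β²/(1 − A₂β²))(z − m/β)²`. -/
theorem stmt15 (β m z A₁ A₂ : ℝ) (hβ : 0 < β) (hA₁ : 0 < A₁) (hA₂ : 0 < A₂)
    (h₁ : A₁ * β ^ 2 ≤ 1) (h₂ : A₂ * β ^ 2 < 1) (hz : z ≥ m / β)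
    (J : ℝ → ℝ)
    (hJ : ∀ ζ, J ζ = A₁ * (max (m - β * ζ) 0) ^ 2 + A₂ * (max (-(m - β * ζ)) 0) ^ 2
        - (ζ - z) ^ 2)
    (ζhat : ℝ) (hζhat : ζhat = (A₂ * β * m - z) / (A₂ * β ^ 2 - 1)) :
    m / β ≤ ζhat ∧ m - β * ζhat ≤ 0 ∧
    IsGreatest (Set.range J) (J ζhat) ∧
    J ζhat = (A₂ * β ^ 2 / (1 - A₂ * β ^ 2)) * (z - m / β) ^ 2 := by
  have hβ' : β ≠ 0 := ne_of_gt hβ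
  have hD : A₂ * β ^ 2 - 1 < 0 := by linarith
  have hD' : A₂ * β ^ 2 - 1 ≠ 0 := ne_of_lt hD
  have h1ne : 1 - A₂ * β ^ 2 ≠ 0 := by linarith
  have hne2 : -(A₂ * β ^ 4) + β ^ 2 ≠ 0 := by
    have := mul_pos (pow_pos hβ 2) (show (0:ℝ) < 1 - A₂ * β ^ 2 by linarith)
    nlinarith
  have hzm : m ≤ β * z := by
    rw [ge_iff_le, div_le_iff₀ hβ] at hz; linarith
  have hkey : m - β * ζhat = (β * z - m) / (A₂ * β ^ 2 - 1) := by
    rw [hζhat, eq_div_iff hD', sub_mul, mul_assoc β, div_mul_cancel₀ _ hD']; ring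
  have hneg : m - β * ζhat ≤ 0 := by
    rw [hkey]
    exact div_nonpos_of_nonneg_of_nonpos (by linarith) (le_of_lt hD)
  have h1 : m / β ≤ ζhat := by
    rw [div_le_iff₀ hβ]; nlinarith
  have hval : J ζhat = (A₂ * β ^ 2 / (1 - A₂ * β ^ 2)) * (z - m / β) ^ 2 := by
    rw [hJ, max_eq_right hneg, max_eq_left (by linarith), hζhat]
    field_simp
    ring
  have hC : 0 ≤ (A₂ * β ^ 2 / (1 - A₂ * β ^ 2)) * (z - m / β) ^ 2 := by
    apply mul_nonneg
    · exact div_nonneg (by positivity) (by linarith)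
    · positivity
  refine ⟨h1, hneg, ⟨⟨ζhat, rfl⟩, ?_⟩, hval⟩
  rintro y ⟨ζ, rfl⟩
  rw [hJ ζ, hval]
  rcases le_total (m - β * ζ) 0 with hc | hc
  · rw [max_eq_right hc, max_eq_left (by linarith)]
    have key : (A₂ * β ^ 2 / (1 - A₂ * β ^ 2)) * (z - m / β) ^ 2
        - (A₁ * (0:ℝ) ^ 2 + A₂ * (-(m - β * ζ)) ^ 2 - (ζ - z) ^ 2)
        = (1 - A₂ * β ^ 2) * (ζ - ζhat) ^ 2 := by
      rw [hζhat]
      field_simp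
      ring
    nlinarith [sq_nonneg (ζ - ζhat), key]
  · rw [max_eq_left hc, max_eq_right (by linarith)]
    have hle : A₁ * (m - β * ζ) ^ 2 + A₂ * (0:ℝ) ^ 2 - (ζ - z) ^ 2 ≤ 0 := by
      nlinarith [sq_nonneg (m - β * ζ), mul_nonneg hc (by linarith : (0:ℝ) ≤ β * z - m),
        mul_nonneg (le_of_lt hβ) hc, sq_nonneg (β * z - m)]
    linarith
end
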